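/- arXiv:1301.3681 — 5 statements merged into one kernel-verified Lean document; each statement's English description precedes it below -/
import Mathlib

section
/- Assume A is indecomposable and the Weyl group W is infinite. Let ω ∈ W and α ∈ Δ₊ be such that ω^l α ≠ α for every positive integer l. Then |ht(ω^l α)| tends to infinity as l tends to infinity through the natural numbers: for every N there exists L such that |ht(ω^l α)| ≥ N for all natural numbers l ≥ L. -/
open Matrix Filter Pointwise

namespace KacMoodyPaper

variable {n : ℕ}

/-- `A` is a generalized Cartan matrix. -/
def IsGCM (A : Matrix (Fin n) (Fin n) ℤ) : Prop :=
  (∀ i, A i i = 2) ∧ (∀ i j, i ≠ j → A i j ≤ 0) ∧ (∀ i j, A i j = 0 ↔ A j i = 0)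

/-- The simple reflection `s i` as a linear map: `s i v = v - (A *ᵥ v) i • e i`. -/
def sMap (A : Matrix (Fin n) (Fin n) ℤ) (i : Fin n) : (Fin n → ℤ) →ₗ[ℤ] (Fin n → ℤ) where
  toFun v := v - (A.mulVec v i) • Pi.single i 1
  map_add' x y := by
    simp only [Matrix.mulVec_add, Pi.add_apply, add_smul]
    abel
  map_smul' c x := by
    simp only [Matrix.mulVec_smul, Pi.smul_apply, smul_eq_mul, RingHom.id_apply, smul_sub,
      smul_smul]

theorem sMap_involutive (A : Matrix (Fin n) (Fin n) ℤ) (i : Fin n) (h2 : A i i = 2)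
    (v : Fin n → ℤ) : sMap A i (sMap A i v) = v := by
  have hAe : A.mulVec (Pi.single i 1) i = A i i := by
    simp [Matrix.mulVec_single]
  simp only [sMap, LinearMap.coe_mk, AddHom.coe_mk, Matrix.mulVec_sub, Matrix.mulVec_smul,
    Pi.sub_apply, Pi.smul_apply, hAe, h2, smul_eq_mul]
  ring_nf

/-- The simple reflection `s i` as a `ℤ`-linear automorphism of `ℤ^n`
(determined by `s i (e j) = e j - A i j • e i`). -/
def s (A : Matrix (Fin n) (Fin n) ℤ) (h2 : ∀ i, A i i = 2) (i : Fin n) :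
    (Fin n → ℤ) ≃ₗ[ℤ] (Fin n → ℤ) :=
  LinearEquiv.ofLinear (sMap A i) (sMap A i)
    (LinearMap.ext fun v => sMap_involutive A i (h2 i) v)
    (LinearMap.ext fun v => sMap_involutive A i (h2 i) v)

/-- The Coxeter element `w = s 1 ∘ s 2 ∘ ⋯ ∘ s n` (applying `s n` first). -/
def cox (A : Matrix (Fin n) (Fin n) ℤ) (h2 : ∀ i, A i i = 2) :
    (Fin n → ℤ) ≃ₗ[ℤ] (Fin n → ℤ) :=
  (List.ofFn (fun i : Fin n => s A h2 i)).prod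

/-- The Weyl group: the subgroup of `GL(n, ℤ)` generated by the simple reflections. -/
def weyl (A : Matrix (Fin n) (Fin n) ℤ) (h2 : ∀ i, A i i = 2) :
    Subgroup ((Fin n → ℤ) ≃ₗ[ℤ] (Fin n → ℤ)) :=
  Subgroup.closure (Set.range (s A h2))

/-- The word length of `ω` with respect to the generators `s 1, …, s n`. -/
noncomputable def len (A : Matrix (Fin n) (Fin n) ℤ) (h2 : ∀ i, A i i = 2)
    (ω : (Fin n → ℤ) ≃ₗ[ℤ] (Fin n → ℤ)) : ℕ :=
  sInf {k | ∃ f : Fin k → Fin n, ω = (List.ofFn (fun j => s A h2 (f j))).prod}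

/-- `v ∈ ℤ^n` is positive: nonzero with all coordinates `≥ 0`. -/
def IsPos (v : Fin n → ℤ) : Prop := v ≠ 0 ∧ ∀ i, 0 ≤ v i

/-- The height of a vector: the sum of its coordinates. -/
def ht (v : Fin n → ℤ) : ℤ := ∑ i, v i

/-- The graph `Γ` on `{1, …, n}` with an edge between `i ≠ j` iff `A i j ≠ 0`. -/
def gcmGraph (A : Matrix (Fin n) (Fin n) ℤ) (hsym : ∀ i j, A i j = 0 ↔ A j i = 0) :
    SimpleGraph (Fin n) where
  Adj i j := i ≠ j ∧ A i j ≠ 0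
  symm := by
    constructor
    rintro i j ⟨hij, h⟩
    exact ⟨hij.symm, fun h0 => h ((hsym i j).mpr h0)⟩
  loopless := by constructor; rintro i ⟨h, -⟩; exact h rfl

/-- `A` is indecomposable: the graph `Γ` is connected. -/
def Indecomposable (A : Matrix (Fin n) (Fin n) ℤ) (hsym : ∀ i j, A i j = 0 ↔ A j i = 0) :
    Prop :=
  (gcmGraph A hsym).Connected

/-- `A` is of indefinite type: there is `u > 0` (componentwise) with `A·u < 0` componentwise. -/
def IndefiniteType (A : Matrix (Fin n) (Fin n) ℤ) : Prop :=
  ∃ u : Fin n → ℤ, (∀ i, 0 < u i) ∧ ∀ i, (A.mulVec u) i < 0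

/-- The fundamental set `K`: positive vectors with connected support and `A·v ≤ 0`. -/
def fundK (A : Matrix (Fin n) (Fin n) ℤ) (hsym : ∀ i j, A i j = 0 ↔ A j i = 0) :
    Set (Fin n → ℤ) :=
  {v | IsPos v ∧ ((gcmGraph A hsym).induce {i | v i ≠ 0}).Connected ∧
    ∀ i, (A.mulVec v) i ≤ 0}

/-- The real roots: the `W`-orbits of the standard basis vectors. -/
def realRoots (A : Matrix (Fin n) (Fin n) ℤ) (h2 : ∀ i, A i i = 2) : Set (Fin n → ℤ) :=
  {v | ∃ g ∈ weyl A h2, ∃ i : Fin n, v = g (Pi.single i 1)}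

/-- The positive imaginary roots: the `W`-orbit of the fundamental set `K`. -/
def posImRoots (A : Matrix (Fin n) (Fin n) ℤ) (h2 : ∀ i, A i i = 2)
    (hsym : ∀ i j, A i j = 0 ↔ A j i = 0) : Set (Fin n → ℤ) :=
  {v | ∃ g ∈ weyl A h2, ∃ k ∈ fundK A hsym, v = g k}

/-- The set of roots `Δ`. -/
def roots (A : Matrix (Fin n) (Fin n) ℤ) (h2 : ∀ i, A i i = 2)
    (hsym : ∀ i j, A i j = 0 ↔ A j i = 0) : Set (Fin n → ℤ) :=
  realRoots A h2 ∪ posImRoots A h2 hsym ∪ (-(posImRoots A h2 hsym))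

/-- The set of positive roots `Δ₊`. -/
def posRoots (A : Matrix (Fin n) (Fin n) ℤ) (h2 : ∀ i, A i i = 2)
    (hsym : ∀ i j, A i j = 0 ↔ A j i = 0) : Set (Fin n → ℤ) :=
  {v ∈ roots A h2 hsym | IsPos v}

/-- The set of negative roots `Δ₋ = -Δ₊`. -/
def negRoots (A : Matrix (Fin n) (Fin n) ℤ) (h2 : ∀ i, A i i = 2)
    (hsym : ∀ i j, A i j = 0 ↔ A j i = 0) : Set (Fin n → ℤ) :=
  -(posRoots A h2 hsym)


-- ==== new material ====
variable (A : Matrix (Fin n) (Fin n) ℤ) (h2 : ∀ i, A i i = 2)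

theorem s_apply (i : Fin n) (v : Fin n → ℤ) :
    s A h2 i v = v - (A.mulVec v i) • Pi.single i 1 := rfl

theorem mul_apply' (x y : (Fin n → ℤ) ≃ₗ[ℤ] (Fin n → ℤ)) (v : Fin n → ℤ) :
    (x * y) v = x (y v) := rfl

theorem s_mul_self (i : Fin n) : s A h2 i * s A h2 i = 1 := by
  apply LinearEquiv.toLinearMap_injective
  apply LinearMap.ext
  intro v
  exact sMap_involutive A i (h2 i) v

def word (L : List (Fin n)) : (Fin n → ℤ) ≃ₗ[ℤ] (Fin n → ℤ) :=
  (L.map (s A h2)).prod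

theorem word_nil : word A h2 [] = 1 := rfl

theorem word_cons (i : Fin n) (L : List (Fin n)) :
    word A h2 (i :: L) = s A h2 i * word A h2 L := by
  simp [word]

theorem word_append (L M : List (Fin n)) :
    word A h2 (L ++ M) = word A h2 L * word A h2 M := by
  simp [word]

theorem word_mem (L : List (Fin n)) : word A h2 L ∈ weyl A h2 := by
  apply list_prod_mem
  intro x hx
  simp only [List.mem_map] at hx
  obtain ⟨i, -, rfl⟩ := hx
  exact Subgroup.subset_closure ⟨i, rfl⟩

theorem word_singleton (i : Fin n) : word A h2 [i] = s A h2 i := by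
  simp [word]

theorem s_inv (i : Fin n) : (s A h2 i)⁻¹ = s A h2 i :=
  inv_eq_of_mul_eq_one_right (s_mul_self A h2 i)

theorem word_concat (L : List (Fin n)) (i : Fin n) :
    word A h2 (L ++ [i]) = word A h2 L * s A h2 i := by
  rw [word_append, word_singleton]

theorem exists_word (w : (Fin n → ℤ) ≃ₗ[ℤ] (Fin n → ℤ)) (hw : w ∈ weyl A h2) :
    ∃ L : List (Fin n), w = word A h2 L := by
  induction hw using Subgroup.closure_induction with
  | mem x hx =>
    obtain ⟨i, rfl⟩ := hx
    exact ⟨[i], by simp [word]⟩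
  | one => exact ⟨[], rfl⟩
  | mul x y hx hy hx' hy' =>
    obtain ⟨L, rfl⟩ := hx'; obtain ⟨M, rfl⟩ := hy'
    exact ⟨L ++ M, (word_append A h2 L M).symm⟩
  | inv x hx hx' =>
    obtain ⟨L, rfl⟩ := hx'
    refine ⟨L.reverse, ?_⟩
    induction L with
    | nil => simp [word]
    | cons a L ih =>
      rw [word_cons, _root_.mul_inv_rev, ih (word_mem A h2 L), List.reverse_cons, word_concat,
        s_inv]



variable {n : ℕ} (A : Matrix (Fin n) (Fin n) ℤ) (h2 : ∀ i, A i i = 2)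

theorem s_mem (i : Fin n) : s A h2 i ∈ weyl A h2 :=
  Subgroup.subset_closure ⟨i, rfl⟩

theorem len_eq (w : (Fin n → ℤ) ≃ₗ[ℤ] (Fin n → ℤ)) :
    len A h2 w = sInf {k | ∃ L : List (Fin n), L.length = k ∧ w = word A h2 L} := by
  unfold len
  congr 1
  ext k
  constructor
  · rintro ⟨f, rfl⟩
    refine ⟨List.ofFn f, by simp, ?_⟩
    rw [word, ← List.ofFn_get (List.map (s A h2) (List.ofFn f))]
    simp
  · rintro ⟨L, rfl, rfl⟩
    refine ⟨L.get, ?_⟩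
    rw [word]
    congr 1
    conv_lhs => rw [← List.ofFn_get L]
    rw [List.map_ofFn]
    rfl

theorem len_le (w : (Fin n → ℤ) ≃ₗ[ℤ] (Fin n → ℤ)) (L : List (Fin n)) (h : w = word A h2 L) :
    len A h2 w ≤ L.length := by
  rw [len_eq]
  exact Nat.sInf_le ⟨L, rfl, h⟩

theorem exists_min_word (w : (Fin n → ℤ) ≃ₗ[ℤ] (Fin n → ℤ)) (hw : w ∈ weyl A h2) :
    ∃ L : List (Fin n), L.length = len A h2 w ∧ w = word A h2 L := by
  obtain ⟨L, hL⟩ := exists_word A h2 w hw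
  have hne : {k | ∃ L : List (Fin n), L.length = k ∧ w = word A h2 L}.Nonempty :=
    ⟨L.length, L, rfl, hL⟩
  have := Nat.sInf_mem hne
  rw [len_eq]
  exact this

theorem len_one : len A h2 1 = 0 :=
  Nat.le_zero.mp (len_le A h2 1 [] rfl)

theorem eq_one_of_len_zero (w : (Fin n → ℤ) ≃ₗ[ℤ] (Fin n → ℤ)) (hw : w ∈ weyl A h2)
    (h : len A h2 w = 0) : w = 1 := by
  obtain ⟨L, hlen, rfl⟩ := exists_min_word A h2 w hw
  rw [h, List.length_eq_zero_iff] at hlen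
  rw [hlen]; rfl

theorem len_mul_s_le (w : (Fin n → ℤ) ≃ₗ[ℤ] (Fin n → ℤ)) (hw : w ∈ weyl A h2) (i : Fin n) :
    len A h2 (w * s A h2 i) ≤ len A h2 w + 1 := by
  obtain ⟨L, hlen, rfl⟩ := exists_min_word A h2 w hw
  calc len A h2 (word A h2 L * s A h2 i) ≤ (L ++ [i]).length :=
        len_le A h2 _ _ (word_concat A h2 L i).symm
    _ = len A h2 (word A h2 L) + 1 := by simp [hlen]

theorem len_ge_mul_s (w : (Fin n → ℤ) ≃ₗ[ℤ] (Fin n → ℤ)) (hw : w ∈ weyl A h2) (i : Fin n) :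
    len A h2 w ≤ len A h2 (w * s A h2 i) + 1 := by
  have h := len_mul_s_le A h2 (w * s A h2 i) (mul_mem hw (s_mem A h2 i)) i
  rwa [mul_assoc, s_mul_self, mul_one] at h

theorem det_s (i : Fin n) : LinearEquiv.det (s A h2 i) = -1 := by
  have hmap : LinearMap.toMatrix (Pi.basisFun ℤ (Fin n)) (Pi.basisFun ℤ (Fin n))
      ((s A h2 i : (Fin n → ℤ) →ₗ[ℤ] (Fin n → ℤ)))
      = 1 + Matrix.replicateCol Unit (-(Pi.single i (1:ℤ))) * Matrix.replicateRow Unit (A i) := by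
    ext k j
    rw [LinearMap.toMatrix_apply]
    simp only [Pi.basisFun_apply, Pi.basisFun_repr]
    show (s A h2 i (Pi.single j 1)) k = _
    rw [s_apply]
    simp only [Matrix.mulVec_single_one, Matrix.col_apply, mul_one, Matrix.add_apply, Matrix.mul_apply,
      Matrix.replicateCol_apply, Matrix.replicateRow_apply, Finset.univ_unique, Finset.sum_singleton,
      Pi.sub_apply, Pi.smul_apply, smul_eq_mul, Pi.neg_apply, Matrix.one_apply,
      Pi.single_apply]
    ring
  have hdet : LinearMap.det ((s A h2 i : (Fin n → ℤ) →ₗ[ℤ] (Fin n → ℤ))) = -1 := by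
    rw [← LinearMap.det_toMatrix (Pi.basisFun ℤ (Fin n)), hmap,
      Matrix.det_one_add_replicateCol_mul_replicateRow]
    simp [dotProduct, Pi.single_apply, h2 i]
  apply Units.ext
  rw [LinearEquiv.coe_det, hdet]
  rfl

theorem det_word (L : List (Fin n)) :
    LinearEquiv.det (word A h2 L) = (-1) ^ L.length := by
  induction L with
  | nil => simp [word]
  | cons a L ih =>
    rw [word_cons, _root_.map_mul, ih, det_s]
    rw [List.length_cons, pow_succ]
    rw [mul_comm]

theorem det_len (w : (Fin n → ℤ) ≃ₗ[ℤ] (Fin n → ℤ)) (hw : w ∈ weyl A h2) :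
    LinearEquiv.det w = (-1) ^ (len A h2 w) := by
  obtain ⟨L, hlen, rfl⟩ := exists_min_word A h2 w hw
  rw [det_word, hlen]

theorem len_mul_s_ne (w : (Fin n → ℤ) ≃ₗ[ℤ] (Fin n → ℤ)) (hw : w ∈ weyl A h2) (i : Fin n) :
    len A h2 (w * s A h2 i) ≠ len A h2 w := by
  intro h
  have e1 : LinearEquiv.det (w * s A h2 i) = LinearEquiv.det w * (-1) := by
    rw [_root_.map_mul, det_s]
  rw [det_len A h2 (w * s A h2 i) (mul_mem hw (s_mem A h2 i)), h,
    det_len A h2 w hw] at e1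
  have e2 : (((-1 : ℤˣ) ^ len A h2 w : ℤˣ) : ℤ) = (((-1:ℤˣ) ^ len A h2 w * (-1) : ℤˣ) : ℤ) := by
    rw [← e1]
  push_cast at e2
  have : ((-1 : ℤ)) ^ len A h2 w ≠ 0 := pow_ne_zero _ (by decide)
  have h5 : ((-1:ℤ) ^ len A h2 w) = 0 := by linarith
  exact this h5

theorem len_s_cases (w : (Fin n → ℤ) ≃ₗ[ℤ] (Fin n → ℤ)) (hw : w ∈ weyl A h2) (i : Fin n) :
    len A h2 (w * s A h2 i) = len A h2 w + 1 ∨ len A h2 (w * s A h2 i) + 1 = len A h2 w := by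
  have h1 := len_mul_s_le A h2 w hw i
  have h3 := len_ge_mul_s A h2 w hw i
  have h4 := len_mul_s_ne A h2 w hw i
  omega




variable {n : ℕ} (A : Matrix (Fin n) (Fin n) ℤ) (h2 : ∀ i, A i i = 2)

/-- Alternating word of length `m` whose rightmost (first applied) letter is `s j`. -/
def alt : Fin n → Fin n → ℕ → ((Fin n → ℤ) ≃ₗ[ℤ] (Fin n → ℤ))
  | _, _, 0 => 1
  | i, j, (m+1) => alt j i m * s A h2 j

@[simp] theorem alt_zero (i j : Fin n) : alt A h2 i j 0 = 1 := rfl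

theorem alt_succ (i j : Fin n) (m : ℕ) :
    alt A h2 i j (m+1) = alt A h2 j i m * s A h2 j := rfl

theorem alt_one (i j : Fin n) : alt A h2 i j 1 = s A h2 j := by
  rw [alt_succ, alt_zero, one_mul]

theorem alt_mem (i j : Fin n) (m : ℕ) : alt A h2 i j m ∈ weyl A h2 := by
  induction m generalizing i j with
  | zero => exact one_mem _
  | succ m ih => exact mul_mem (ih j i) (s_mem A h2 j)

theorem len_alt_le (i j : Fin n) (m : ℕ) : len A h2 (alt A h2 i j m) ≤ m := by
  induction m generalizing i j with
  | zero => simp [len_one]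
  | succ m ih =>
    rw [alt_succ]
    have := len_mul_s_le A h2 (alt A h2 j i m) (alt_mem A h2 j i m) j
    have := ih j i
    omega

theorem alt_left (i j : Fin n) (m : ℕ) :
    alt A h2 i j (m+1) = (if m % 2 = 0 then s A h2 j else s A h2 i) * alt A h2 i j m := by
  induction m generalizing i j with
  | zero => simp [alt_one]
  | succ m ih =>
    rw [alt_succ, ih j i, alt_succ, mul_assoc]
    rcases Nat.even_or_odd m with hm | hm
    · have h0 : m % 2 = 0 := Nat.even_iff.mp hm
      have h1 : (m+1) % 2 = 1 := by omega
      simp [h0, h1]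
    · have h0 : m % 2 = 1 := Nat.odd_iff.mp hm
      have h1 : (m+1) % 2 = 0 := by omega
      simp [h0, h1]

theorem alt_split (q p : ℕ) (i j : Fin n) :
    alt A h2 i j (p + q) =
      (if q % 2 = 0 then alt A h2 i j p else alt A h2 j i p) * alt A h2 i j q := by
  induction q generalizing i j with
  | zero => simp
  | succ q ih =>
    have : p + (q + 1) = (p + q) + 1 := by omega
    rw [this, alt_succ, ih j i, alt_succ, mul_assoc]
    rcases Nat.even_or_odd q with hm | hm
    · have h0 : q % 2 = 0 := Nat.even_iff.mp hm
      have h1 : (q+1) % 2 = 1 := by omega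
      simp [h0, h1]
    · have h0 : q % 2 = 1 := Nat.odd_iff.mp hm
      have h1 : (q+1) % 2 = 0 := by omega
      simp [h0, h1]

theorem len_mul_le (x y : (Fin n → ℤ) ≃ₗ[ℤ] (Fin n → ℤ)) (hx : x ∈ weyl A h2)
    (hy : y ∈ weyl A h2) : len A h2 (x * y) ≤ len A h2 x + len A h2 y := by
  obtain ⟨L, hL, rfl⟩ := exists_min_word A h2 x hx
  obtain ⟨M, hM, rfl⟩ := exists_min_word A h2 y hy
  calc len A h2 (word A h2 L * word A h2 M) ≤ (L ++ M).length :=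
        len_le A h2 _ _ (word_append A h2 L M).symm
    _ = _ := by simp [hL, hM]

/-- Braid relation, commuting case. -/
theorem braid_comm (i j : Fin n) (ha : A i j = 0) (hb : A j i = 0) :
    alt A h2 i j 2 = alt A h2 j i 2 := by
  have : ∀ v, s A h2 i (s A h2 j v) = s A h2 j (s A h2 i v) := by
    intro v
    simp only [s_apply, Matrix.mulVec_sub, Matrix.mulVec_smul, Matrix.mulVec_single_one, Matrix.col_apply,
      Pi.sub_apply, Pi.smul_apply, smul_eq_mul, mul_one, ha, hb]
    match_scalars <;> ring
  apply LinearEquiv.ext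
  intro v
  exact this v

theorem braid_one (i j : Fin n) (ha : A i j = -1) (hb : A j i = -1) :
    alt A h2 i j 3 = alt A h2 j i 3 := by
  apply LinearEquiv.ext
  intro v
  show s A h2 j (s A h2 i (s A h2 j v)) = s A h2 i (s A h2 j (s A h2 i v))
  simp only [s_apply, Matrix.mulVec_sub, Matrix.mulVec_smul, Matrix.mulVec_single_one, Matrix.col_apply,
    Pi.sub_apply, Pi.smul_apply, smul_eq_mul, mul_one, h2, ha, hb]
  match_scalars <;> ring

set_option maxHeartbeats 1000000 in
theorem braid_two (i j : Fin n) (ha : A i j = -1) (hb : A j i = -2) :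
    alt A h2 i j 4 = alt A h2 j i 4 := by
  apply LinearEquiv.ext
  intro v
  show s A h2 i (s A h2 j (s A h2 i (s A h2 j v)))
     = s A h2 j (s A h2 i (s A h2 j (s A h2 i v)))
  simp only [s_apply, Matrix.mulVec_sub, Matrix.mulVec_smul, Matrix.mulVec_single_one, Matrix.col_apply,
    Pi.sub_apply, Pi.smul_apply, smul_eq_mul, mul_one, h2, ha, hb]
  match_scalars <;> ring

set_option maxHeartbeats 1000000 in
theorem braid_three (i j : Fin n) (ha : A i j = -1) (hb : A j i = -3) :
    alt A h2 i j 6 = alt A h2 j i 6 := by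
  apply LinearEquiv.ext
  intro v
  show s A h2 i (s A h2 j (s A h2 i (s A h2 j (s A h2 i (s A h2 j v)))))
     = s A h2 j (s A h2 i (s A h2 j (s A h2 i (s A h2 j (s A h2 i v)))))
  simp only [s_apply, Matrix.mulVec_sub, Matrix.mulVec_smul, Matrix.mulVec_single_one, Matrix.col_apply,
    Pi.sub_apply, Pi.smul_apply, smul_eq_mul, mul_one, h2, ha, hb]
  match_scalars <;> ring

/-- Applying `s j` to a combination `c • e i + d • e j`. -/
theorem s_comb (i j : Fin n) (c d : ℤ) :
    s A h2 j (c • Pi.single i 1 + d • Pi.single j 1)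
      = c • Pi.single i 1 + ((-(A j i)) * c - d) • Pi.single j 1 := by
  simp only [s_apply, Matrix.mulVec_add, Matrix.mulVec_smul, Matrix.mulVec_single_one, Matrix.col_apply,
    Pi.add_apply, Pi.smul_apply, smul_eq_mul, mul_one, h2]
  match_scalars <;> ring




variable {n : ℕ} (A : Matrix (Fin n) (Fin n) ℤ) (h2 : ∀ i, A i i = 2)

theorem s_comb' (i j : Fin n) (c d : ℤ) :
    s A h2 i (c • Pi.single i 1 + d • Pi.single j 1)
      = ((-(A i j)) * d - c) • Pi.single i 1 + d • Pi.single j 1 := by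
  simp only [s_apply, Matrix.mulVec_add, Matrix.mulVec_smul, Matrix.mulVec_single_one, Matrix.col_apply,
    Pi.add_apply, Pi.smul_apply, smul_eq_mul, mul_one, h2]
  match_scalars <;> ring

theorem single_comb (i j : Fin n) :
    (Pi.single i 1 : Fin n → ℤ) = (1:ℤ) • Pi.single i 1 + (0:ℤ) • Pi.single j 1 := by
  module

theorem alt_apply_even (i j : Fin n) (m : ℕ) (hm : m % 2 = 0) (v0 : Fin n → ℤ) (c d : ℤ)
    (h : alt A h2 i j m v0 = c • Pi.single i 1 + d • Pi.single j 1) :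
    alt A h2 i j (m+1) v0 = c • Pi.single i 1 + ((-(A j i)) * c - d) • Pi.single j 1 := by
  have hstep : alt A h2 i j (m+1) v0 = s A h2 j (alt A h2 i j m v0) := by
    rw [alt_left, if_pos hm]; rfl
  rw [hstep, h, s_comb]

theorem alt_apply_odd (i j : Fin n) (m : ℕ) (hm : m % 2 = 1) (v0 : Fin n → ℤ) (c d : ℤ)
    (h : alt A h2 i j m v0 = c • Pi.single i 1 + d • Pi.single j 1) :
    alt A h2 i j (m+1) v0 = ((-(A i j)) * d - c) • Pi.single i 1 + d • Pi.single j 1 := by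
  have hstep : alt A h2 i j (m+1) v0 = s A h2 i (alt A h2 i j m v0) := by
    rw [alt_left, if_neg (by omega)]; rfl
  rw [hstep, h, s_comb']

theorem alt_growth (i j : Fin n) (ha : A i j ≤ 0) (hb : A j i ≤ 0)
    (hab : 4 ≤ A i j * A j i) (m : ℕ) :
    ∃ c d : ℤ, 0 ≤ c ∧ 0 ≤ d ∧
      alt A h2 i j m (Pi.single i 1) = c • Pi.single i 1 + d • Pi.single j 1 ∧
      (m % 2 = 0 → (-(A i j)) * d ≤ 2 * c) ∧ (m % 2 = 1 → (-(A j i)) * c ≤ 2 * d) := by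
  set a : ℤ := -(A i j) with haa
  set b : ℤ := -(A j i) with hbb
  have ha0 : 0 ≤ a := by omega
  have hb0 : 0 ≤ b := by omega
  have hab4 : 4 ≤ a * b := by nlinarith
  induction m with
  | zero =>
    exact ⟨1, 0, by norm_num, by norm_num, by rw [alt_zero]; exact single_comb i j,
      by intro; norm_num, by omega⟩
  | succ m ih =>
    obtain ⟨c, d, hc, hd, hv, he, ho⟩ := ih
    rcases Nat.even_or_odd m with hm | hm
    · have h0 : m % 2 = 0 := Nat.even_iff.mp hm
      have hinv := he h0
      have key : 2 * d ≤ b * c := by nlinarith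
      refine ⟨c, b * c - d, hc, by omega, ?_, ?_, ?_⟩
      · exact alt_apply_even A h2 i j m h0 _ c d hv
      · intro hcon; omega
      · intro _
        omega
    · have h0 : m % 2 = 1 := Nat.odd_iff.mp hm
      have hinv := ho h0
      have key : 2 * c ≤ a * d := by nlinarith
      refine ⟨a * d - c, d, by omega, hd, ?_, ?_, ?_⟩
      · exact alt_apply_odd A h2 i j m h0 _ c d hv
      · intro _
        omega
      · intro hcon; omega




variable {n : ℕ} (A : Matrix (Fin n) (Fin n) ℤ) (h2 : ∀ i, A i i = 2)

theorem offdiag_vals (x y P : ℤ) (hx : x ≤ 0) (hy : y ≤ 0) (hP : x * y = P)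
    (h1 : 1 ≤ P) (h4 : P < 4) :
    (x = -1 ∧ y = -P) ∨ (P = 2 ∧ x = -2 ∧ y = -1) ∨ (P = 3 ∧ x = -3 ∧ y = -1) := by
  have hx0 : x ≠ 0 := by rintro rfl; simp at hP; omega
  have hy0 : y ≠ 0 := by rintro rfl; simp at hP; omega
  have hx1 : x ≤ -1 := by omega
  have hy1 : y ≤ -1 := by omega
  have hxP : -P ≤ x := by
    nlinarith [mul_le_mul_of_nonneg_left (show (1:ℤ) ≤ -y by omega) (show (0:ℤ) ≤ -x by omega)]
  have hcase : x = -1 ∨ x = -2 ∨ x = -3 := by omega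
  rcases hcase with h | h | h <;> subst h
  · left; exact ⟨rfl, by linarith⟩
  · have : y = -1 ∧ P = 2 := by constructor <;> omega
    right; left; exact ⟨this.2, rfl, this.1⟩
  · have : y = -1 ∧ P = 3 := by constructor <;> omega
    right; right; exact ⟨this.2, rfl, this.1⟩

theorem rank2_contra (i j : Fin n) (u : (Fin n → ℤ) ≃ₗ[ℤ] (Fin n → ℤ))
    (hu : u ∈ weyl A h2) (m q : ℕ) (hq1 : 1 ≤ q) (hqm : q ≤ m)
    (hbraid : alt A h2 i j q = alt A h2 j i q)
    (hlen : len A h2 (u * alt A h2 i j m) = len A h2 u + m)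
    (hasc : len A h2 (u * alt A h2 i j m * s A h2 i)
      = len A h2 (u * alt A h2 i j m) + 1) : False := by
  obtain ⟨q', rfl⟩ : ∃ q', q = q' + 1 := ⟨q - 1, by omega⟩
  have hqsucc : alt A h2 j i (q'+1) = alt A h2 i j q' * s A h2 i := alt_succ A h2 j i q'
  have hsplit : alt A h2 i j m =
      (if (q'+1) % 2 = 0 then alt A h2 i j (m - (q'+1)) else alt A h2 j i (m - (q'+1)))
        * alt A h2 i j (q'+1) := by
    have := alt_split A h2 (q'+1) (m - (q'+1)) i j
    rwa [Nat.sub_add_cancel hqm] at this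
  set X := (if (q'+1) % 2 = 0 then alt A h2 i j (m - (q'+1)) else alt A h2 j i (m - (q'+1)))
    with hXdef
  have hXmem : X ∈ weyl A h2 := by
    rw [hXdef]; split_ifs
    · exact alt_mem A h2 i j _
    · exact alt_mem A h2 j i _
  have hXlen : len A h2 X ≤ m - (q'+1) := by
    rw [hXdef]; split_ifs
    · exact len_alt_le A h2 i j _
    · exact len_alt_le A h2 j i _
  have key : u * alt A h2 i j m * s A h2 i = u * X * alt A h2 i j q' := by
    rw [hsplit, hbraid, hqsucc]
    simp only [mul_assoc]
    rw [s_mul_self, mul_one]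
  have hb1 : len A h2 (u * X * alt A h2 i j q')
      ≤ len A h2 u + len A h2 X + len A h2 (alt A h2 i j q') := by
    have h1 := len_mul_le A h2 (u * X) (alt A h2 i j q') (mul_mem hu hXmem)
      (alt_mem A h2 i j q')
    have h3 := len_mul_le A h2 u X hu hXmem
    omega
  have h4 := len_alt_le A h2 i j q'
  rw [key] at hasc
  omega

theorem rank2 (hoff : ∀ p q : Fin n, p ≠ q → A p q ≤ 0)
    (hsym : ∀ p q : Fin n, A p q = 0 ↔ A q p = 0)
    (i j : Fin n) (hij : i ≠ j) (u : (Fin n → ℤ) ≃ₗ[ℤ] (Fin n → ℤ))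
    (hu : u ∈ weyl A h2) (m : ℕ) (hm : 1 ≤ m)
    (hlen : len A h2 (u * alt A h2 i j m) = len A h2 u + m)
    (hasc : len A h2 (u * alt A h2 i j m * s A h2 i)
      = len A h2 (u * alt A h2 i j m) + 1) :
    ∃ c d : ℤ, 0 ≤ c ∧ 0 ≤ d ∧
      alt A h2 i j m (Pi.single i 1) = c • Pi.single i 1 + d • Pi.single j 1 := by
  have ha : A i j ≤ 0 := hoff i j hij
  have hb : A j i ≤ 0 := hoff j i hij.symm
  have E0 : alt A h2 i j 0 (Pi.single i 1)
      = (1:ℤ) • Pi.single i 1 + (0:ℤ) • Pi.single j 1 := single_comb i j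
  have E1 := alt_apply_even A h2 i j 0 rfl _ _ _ E0
  have E2 := alt_apply_odd A h2 i j 1 rfl _ _ _ E1
  have E3 := alt_apply_even A h2 i j 2 rfl _ _ _ E2
  have E4 := alt_apply_odd A h2 i j 3 rfl _ _ _ E3
  have E5 := alt_apply_even A h2 i j 4 rfl _ _ _ E4
  by_cases h4 : 4 ≤ A i j * A j i
  · obtain ⟨c, d, hc, hd, hv, -, -⟩ := alt_growth A h2 i j ha hb h4 m
    exact ⟨c, d, hc, hd, hv⟩
  · by_cases h0 : A i j * A j i = 0
    · -- product 0 : generators commute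
      have hab : A i j = 0 ∧ A j i = 0 := by
        rcases mul_eq_zero.mp h0 with h | h
        · exact ⟨h, (hsym i j).mp h⟩
        · exact ⟨(hsym j i).mp h, h⟩
      rcases Nat.lt_or_ge m 2 with hm2 | hm2
      · have hm1 : m = 1 := by omega
        subst hm1
        exact ⟨1, (-(A j i)) * 1 - 0, by norm_num, by linarith, E1⟩
      · exact (rank2_contra A h2 i j u hu m 2 (by norm_num) hm2
          (braid_comm A h2 i j hab.1 hab.2) hlen hasc).elim
    · have h1 : 1 ≤ A i j * A j i := by
        have : 0 ≤ A i j * A j i := by nlinarith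
        omega
      have hvals := offdiag_vals (A i j) (A j i) (A i j * A j i) ha hb rfl h1 (by omega)
      -- three possible product values
      have hPcases : A i j * A j i = 1 ∨ A i j * A j i = 2 ∨ A i j * A j i = 3 := by omega
      rcases hPcases with hP | hP | hP
      · -- product 1, braid length 3
        have hva : A i j = -1 := by
          rcases hvals with ⟨h, -⟩ | ⟨h, -, -⟩ | ⟨h, -, -⟩ <;> omega
        have hvb : A j i = -1 := by nlinarith
        rcases Nat.lt_or_ge m 3 with hm3 | hm3
        · interval_cases m
          · exact ⟨1, (-(A j i)) * 1 - 0, by norm_num, by linarith, E1⟩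
          · refine ⟨_, _, ?_, ?_, E2⟩ <;> (simp only [hva, hvb]; norm_num)
        · exact (rank2_contra A h2 i j u hu m 3 (by norm_num) hm3
            (braid_one A h2 i j hva hvb) hlen hasc).elim
      · -- product 2, braid length 4
        have hvals2 : (A i j = -1 ∧ A j i = -2) ∨ (A i j = -2 ∧ A j i = -1) := by
          rcases hvals with ⟨hx, hy⟩ | ⟨-, hx, hy⟩ | ⟨hp, -, -⟩
          · left; exact ⟨hx, by omega⟩
          · right; exact ⟨hx, hy⟩
          · omega
        rcases Nat.lt_or_ge m 4 with hm4 | hm4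
        · interval_cases m
          · exact ⟨1, (-(A j i)) * 1 - 0, by norm_num, by linarith, E1⟩
          · rcases hvals2 with ⟨hva, hvb⟩ | ⟨hva, hvb⟩ <;>
              (refine ⟨_, _, ?_, ?_, E2⟩ <;> (simp only [hva, hvb]; norm_num))
          · rcases hvals2 with ⟨hva, hvb⟩ | ⟨hva, hvb⟩ <;>
              (refine ⟨_, _, ?_, ?_, E3⟩ <;> (simp only [hva, hvb]; norm_num))
        · have hbraid : alt A h2 i j 4 = alt A h2 j i 4 := by
            rcases hvals2 with ⟨hva, hvb⟩ | ⟨hva, hvb⟩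
            · exact braid_two A h2 i j hva hvb
            · exact (braid_two A h2 j i hvb hva).symm
          exact (rank2_contra A h2 i j u hu m 4 (by norm_num) hm4 hbraid hlen hasc).elim
      · -- product 3, braid length 6
        have hvals3 : (A i j = -1 ∧ A j i = -3) ∨ (A i j = -3 ∧ A j i = -1) := by
          rcases hvals with ⟨hx, hy⟩ | ⟨hp, -, -⟩ | ⟨-, hx, hy⟩
          · left; exact ⟨hx, by omega⟩
          · omega
          · right; exact ⟨hx, hy⟩
        rcases Nat.lt_or_ge m 6 with hm6 | hm6
        · interval_cases m
          · exact ⟨1, (-(A j i)) * 1 - 0, by norm_num, by linarith, E1⟩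
          · rcases hvals3 with ⟨hva, hvb⟩ | ⟨hva, hvb⟩ <;>
              (refine ⟨_, _, ?_, ?_, E2⟩ <;> (simp only [hva, hvb]; norm_num))
          · rcases hvals3 with ⟨hva, hvb⟩ | ⟨hva, hvb⟩ <;>
              (refine ⟨_, _, ?_, ?_, E3⟩ <;> (simp only [hva, hvb]; norm_num))
          · rcases hvals3 with ⟨hva, hvb⟩ | ⟨hva, hvb⟩ <;>
              (refine ⟨_, _, ?_, ?_, E4⟩ <;> (simp only [hva, hvb]; norm_num))
          · rcases hvals3 with ⟨hva, hvb⟩ | ⟨hva, hvb⟩ <;>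
              (refine ⟨_, _, ?_, ?_, E5⟩ <;> (simp only [hva, hvb]; norm_num))
        · have hbraid : alt A h2 i j 6 = alt A h2 j i 6 := by
            rcases hvals3 with ⟨hva, hvb⟩ | ⟨hva, hvb⟩
            · exact braid_three A h2 i j hva hvb
            · exact (braid_three A h2 j i hvb hva).symm
          exact (rank2_contra A h2 i j u hu m 6 (by norm_num) hm6 hbraid hlen hasc).elim




variable {n : ℕ} (A : Matrix (Fin n) (Fin n) ℤ) (h2 : ∀ i, A i i = 2)

theorem peel : ∀ (fuel : ℕ), ∀ w ∈ weyl A h2, ∀ i j : Fin n, i ≠ j → len A h2 w ≤ fuel →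
    len A h2 (w * s A h2 i) = len A h2 w + 1 → len A h2 (w * s A h2 j) + 1 = len A h2 w →
    ∃ u ∈ weyl A h2, ∃ m, 1 ≤ m ∧ w = u * alt A h2 i j m ∧ len A h2 w = len A h2 u + m ∧
      len A h2 (u * s A h2 i) = len A h2 u + 1 ∧ len A h2 (u * s A h2 j) = len A h2 u + 1 := by
  intro fuel
  induction fuel with
  | zero =>
    intro w hw i j hij hfuel hi hj
    omega
  | succ fuel ih =>
    intro w hw i j hij hfuel hi hj
    set w1 := w * s A h2 j with hw1def
    have hw1 : w1 ∈ weyl A h2 := mul_mem hw (s_mem A h2 j)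
    have hw1j : w1 * s A h2 j = w := by
      rw [hw1def, mul_assoc, s_mul_self, mul_one]
    rcases len_s_cases A h2 w1 hw1 i with hcase | hcase
    · refine ⟨w1, hw1, 1, le_refl 1, ?_, ?_, hcase, ?_⟩
      · rw [alt_one, hw1j]
      · omega
      · rw [hw1j]; omega
    · have hfuel1 : len A h2 w1 ≤ fuel := by omega
      have hj1 : len A h2 (w1 * s A h2 j) = len A h2 w1 + 1 := by rw [hw1j]; omega
      obtain ⟨u, hu, m, hm1, hweq, hlen1, huj, hui⟩ :=
        ih w1 hw1 j i hij.symm hfuel1 hj1 hcase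
      refine ⟨u, hu, m + 1, by omega, ?_, by omega, hui, huj⟩
      rw [alt_succ, ← mul_assoc, ← hweq, hw1j]

theorem s_single_self (i : Fin n) : s A h2 i (Pi.single i 1) = -(Pi.single i 1) := by
  rw [s_apply]
  simp only [Matrix.mulVec_single_one, Matrix.col_apply, mul_one, h2]
  module

theorem ascent_pos : ∀ (k : ℕ), ∀ w ∈ weyl A h2, len A h2 w ≤ k → ∀ i : Fin n,
    (∀ p q : Fin n, p ≠ q → A p q ≤ 0) → (∀ p q : Fin n, A p q = 0 ↔ A q p = 0) →
    len A h2 (w * s A h2 i) = len A h2 w + 1 → ∀ x, 0 ≤ w (Pi.single i 1) x := by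
  intro k
  induction k with
  | zero =>
    intro w hw hk i _ _ _ x
    have hw1 : w = 1 := eq_one_of_len_zero A h2 w hw (by omega)
    subst hw1
    have h1 : (1 : (Fin n → ℤ) ≃ₗ[ℤ] (Fin n → ℤ)) (Pi.single i 1) = Pi.single i 1 := rfl
    rw [h1, Pi.single_apply]
    split_ifs <;> norm_num
  | succ k ih =>
    intro w hw hk i hoff hsym hasc x
    by_cases h0 : len A h2 w = 0
    · have hw1 : w = 1 := eq_one_of_len_zero A h2 w hw h0
      subst hw1
      have h1 : (1 : (Fin n → ℤ) ≃ₗ[ℤ] (Fin n → ℤ)) (Pi.single i 1) = Pi.single i 1 := rfl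
      rw [h1, Pi.single_apply]
      split_ifs <;> norm_num
    · obtain ⟨L, hL, hwL⟩ := exists_min_word A h2 w hw
      have hLne : L ≠ [] := by
        intro h; rw [h] at hL; simp at hL; omega
      set j := L.getLast hLne with hjdef
      have hsplit : w = word A h2 L.dropLast * s A h2 j := by
        rw [hwL]
        conv_lhs => rw [← List.dropLast_append_getLast hLne]
        rw [word_concat]
      have hwj : w * s A h2 j = word A h2 L.dropLast := by
        rw [hsplit, mul_assoc, s_mul_self, mul_one]
      have hdesc : len A h2 (w * s A h2 j) + 1 = len A h2 w := by
        have hle : len A h2 (w * s A h2 j) ≤ L.dropLast.length := by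
          rw [hwj]; exact len_le A h2 _ _ rfl
        have hdl : L.dropLast.length = len A h2 w - 1 := by
          rw [List.length_dropLast, hL]
        have hge := len_ge_mul_s A h2 w hw j
        omega
      have hij : i ≠ j := by
        intro h
        rw [h] at hasc
        omega
      obtain ⟨u, hu, m, hm1, hweq, hlen, hui, huj⟩ :=
        peel A h2 (len A h2 w) w hw i j hij (le_refl _) hasc hdesc
      have hlen' : len A h2 (u * alt A h2 i j m) = len A h2 u + m := by
        rw [← hweq]; exact hlen
      have hasc' : len A h2 (u * alt A h2 i j m * s A h2 i)
          = len A h2 (u * alt A h2 i j m) + 1 := by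
        rw [← hweq]; exact hasc
      obtain ⟨c, d, hc, hd, hv⟩ := rank2 A h2 hoff hsym i j hij u hu m hm1 hlen' hasc'
      have hku : len A h2 u ≤ k := by omega
      have hpi := ih u hu hku i hoff hsym (by omega) x
      have hpj := ih u hu hku j hoff hsym (by omega) x
      have happ : w (Pi.single i 1) = c • u (Pi.single i 1) + d • u (Pi.single j 1) := by
        rw [hweq, mul_apply', hv, _root_.map_add, _root_.map_smul, _root_.map_smul]
      rw [happ]
      have h1 : 0 ≤ c * u (Pi.single i 1) x := mul_nonneg hc hpi
      have h2' : 0 ≤ d * u (Pi.single j 1) x := mul_nonneg hd hpj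
      simp only [Pi.add_apply, Pi.smul_apply, smul_eq_mul]
      omega

theorem real_sign (hoff : ∀ p q : Fin n, p ≠ q → A p q ≤ 0)
    (hsym : ∀ p q : Fin n, A p q = 0 ↔ A q p = 0)
    (w : (Fin n → ℤ) ≃ₗ[ℤ] (Fin n → ℤ)) (hw : w ∈ weyl A h2) (i : Fin n) :
    (∀ x, 0 ≤ w (Pi.single i 1) x) ∨ (∀ x, w (Pi.single i 1) x ≤ 0) := by
  rcases len_s_cases A h2 w hw i with hcase | hcase
  · exact Or.inl (ascent_pos A h2 (len A h2 w) w hw (le_refl _) i hoff hsym hcase)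
  · right
    set w' := w * s A h2 i with hw'def
    have hw' : w' ∈ weyl A h2 := mul_mem hw (s_mem A h2 i)
    have hback : w' * s A h2 i = w := by rw [hw'def, mul_assoc, s_mul_self, mul_one]
    have hasc : len A h2 (w' * s A h2 i) = len A h2 w' + 1 := by rw [hback]; omega
    have hpos := ascent_pos A h2 (len A h2 w') w' hw' (le_refl _) i hoff hsym hasc
    intro x
    have : w (Pi.single i 1) = -(w' (Pi.single i 1)) := by
      rw [← hback, mul_apply', s_single_self, _root_.map_neg]
    rw [this]
    simp only [Pi.neg_apply]
    have := hpos x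
    omega

theorem orbit_pos (hoff : ∀ p q : Fin n, p ≠ q → A p q ≤ 0)
    (hsym : ∀ p q : Fin n, A p q = 0 ↔ A q p = 0)
    (v : Fin n → ℤ) (hv0 : ∀ x, 0 ≤ v x) (hAv : ∀ p, A.mulVec v p ≤ 0) :
    ∀ (k : ℕ), ∀ w ∈ weyl A h2, len A h2 w ≤ k → ∀ x, 0 ≤ w v x := by
  intro k
  induction k with
  | zero =>
    intro w hw hk x
    have hw1 : w = 1 := eq_one_of_len_zero A h2 w hw (by omega)
    subst hw1
    exact hv0 x
  | succ k ih =>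
    intro w hw hk x
    by_cases h0 : len A h2 w = 0
    · have hw1 : w = 1 := eq_one_of_len_zero A h2 w hw h0
      subst hw1
      exact hv0 x
    · obtain ⟨L, hL, hwL⟩ := exists_min_word A h2 w hw
      have hLne : L ≠ [] := by
        intro h; rw [h] at hL; simp at hL; omega
      set j := L.getLast hLne with hjdef
      have hsplit : w = word A h2 L.dropLast * s A h2 j := by
        rw [hwL]
        conv_lhs => rw [← List.dropLast_append_getLast hLne]
        rw [word_concat]
      set w' := word A h2 L.dropLast with hw'def
      have hw' : w' ∈ weyl A h2 := word_mem A h2 _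
      have hlenw' : len A h2 w' ≤ k := by
        have := len_le A h2 w' L.dropLast rfl
        rw [List.length_dropLast, hL] at this
        omega
      have hasc : len A h2 (w' * s A h2 j) = len A h2 w' + 1 := by
        have h1 : w' * s A h2 j = w := hsplit.symm
        have hge := len_ge_mul_s A h2 w' hw' j
        have hle := len_mul_s_le A h2 w' hw' j
        rw [h1] at hge hle ⊢
        have hL' := len_le A h2 w' L.dropLast rfl
        rw [List.length_dropLast, hL] at hL'
        omega
      have hpos := ascent_pos A h2 (len A h2 w') w' hw' (le_refl _) j hoff hsym hasc
      have happ : w v = w' v - (A.mulVec v j) • w' (Pi.single j 1) := by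
        rw [hsplit, mul_apply', s_apply, _root_.map_sub, _root_.map_smul]
      rw [happ]
      simp only [Pi.sub_apply, Pi.smul_apply, smul_eq_mul]
      have h1 := ih w' hw' hlenw' x
      have h2' := hpos x
      have h3 := hAv j
      nlinarith



theorem main_assembly {n : ℕ} (A : Matrix (Fin n) (Fin n) ℤ)
    (hA : IsGCM A)
    (ω : (Fin n → ℤ) ≃ₗ[ℤ] (Fin n → ℤ)) (hω : ω ∈ weyl A hA.1)
    (α : Fin n → ℤ) (hα : α ∈ posRoots A hA.1 hA.2.2)
    (hfix : ∀ l : ℕ, 0 < l → (ω ^ l) α ≠ α) :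
    ∀ N : ℕ, ∃ L : ℕ, ∀ l : ℕ, L ≤ l → (N : ℤ) ≤ |ht ((ω ^ l) α)| := by
  obtain ⟨h2, hoff, hsym⟩ := hA
  set β : ℕ → (Fin n → ℤ) := fun l => (ω ^ l) α with hβdef
  have hsign : ∀ l : ℕ, (∀ x, 0 ≤ β l x) ∨ (∀ x, β l x ≤ 0) := by
    intro l
    have hωl : ω ^ l ∈ weyl A h2 := pow_mem hω l
    have hroots := hα.1
    rcases hroots with (⟨g, hg, i, rfl⟩ | ⟨g, hg, kv, hkv, rfl⟩) | hneg
    · have hrw : β l = (ω ^ l * g) (Pi.single i 1) := rfl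
      rw [hrw]
      exact real_sign A h2 hoff hsym _ (mul_mem hωl hg) i
    · left
      have hrw : β l = (ω ^ l * g) kv := rfl
      rw [hrw]
      exact orbit_pos A h2 hoff hsym kv (fun x => hkv.1.2 x) hkv.2.2
        (len A h2 (ω ^ l * g)) _ (mul_mem hωl hg) (le_refl _)
    · right
      rw [Set.mem_neg] at hneg
      obtain ⟨g, hg, kv, hkv, hval⟩ := hneg
      have hαval : α = -(g kv) := by rw [← hval, neg_neg]
      have hrw : β l = -((ω ^ l * g) kv) := by
        show (ω ^ l) α = _
        rw [hαval, _root_.map_neg]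
        rfl
      rw [hrw]
      intro x
      simp only [Pi.neg_apply]
      have := orbit_pos A h2 hoff hsym kv (fun x => hkv.1.2 x) hkv.2.2
        (len A h2 (ω ^ l * g)) _ (mul_mem hωl hg) (le_refl _) x
      omega
  have key : ∀ a b : ℕ, a < b → β a = β b → False := by
    intro a b hab hEq
    have h1 : (ω ^ b) α = (ω ^ a) α := hEq.symm
    have hpow : ω ^ b = ω ^ (b - a) * ω ^ a := by
      rw [← pow_add]
      congr 1
      omega
    rw [hpow] at h1
    have h2' : (ω ^ (b - a)) ((ω ^ a) α) = (ω ^ a) α := h1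
    have h3 : (ω ^ (b - a)) α = α := by
      apply (ω ^ a).injective
      rw [← mul_apply', pow_mul_comm ω a (b - a), mul_apply', h2']
    exact hfix (b - a) (by omega) h3
  have hinj : Function.Injective β := by
    intro l1 l2 hEq
    rcases lt_trichotomy l1 l2 with h | h | h
    · exact (key l1 l2 h hEq).elim
    · exact h
    · exact (key l2 l1 h hEq.symm).elim
  intro N
  have hBfin : (Set.pi Set.univ (fun _ : Fin n => Set.Icc (-(N:ℤ)) N)).Finite :=
    Set.Finite.pi (fun _ => Set.finite_Icc _ _)
  have hSfin : (β ⁻¹' (Set.pi Set.univ (fun _ : Fin n => Set.Icc (-(N:ℤ)) N))).Finite :=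
    hBfin.preimage hinj.injOn
  obtain ⟨b, hb⟩ := hSfin.bddAbove
  refine ⟨b + 1, fun l hl => ?_⟩
  have hlnot : β l ∉ Set.pi Set.univ (fun _ : Fin n => Set.Icc (-(N:ℤ)) N) := by
    intro hmem
    have : l ≤ b := hb hmem
    omega
  rw [Set.mem_pi] at hlnot
  push_neg at hlnot
  obtain ⟨x, -, hx⟩ := hlnot
  rw [Set.mem_Icc] at hx
  push_neg at hx
  show (N : ℤ) ≤ |ht (β l)|
  rcases hsign l with hpos | hneg
  · have hxgt : (N:ℤ) < β l x := hx (by have := hpos x; omega)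
    have hsum : β l x ≤ ht (β l) :=
      Finset.single_le_sum (fun y _ => hpos y) (Finset.mem_univ x)
    have hht0 : 0 ≤ ht (β l) := Finset.sum_nonneg (fun y _ => hpos y)
    rw [abs_of_nonneg hht0]
    omega
  · have hxlt : β l x < -(N:ℤ) := by
      rcases le_or_gt (-(N:ℤ)) (β l x) with h | h
      · have := hx h
        have := hneg x
        omega
      · exact h
    have hsum : -(β l x) ≤ -(ht (β l)) := by
      calc -(β l x) ≤ ∑ y, -(β l y) :=
            Finset.single_le_sum (f := fun y => -(β l y))
              (fun y _ => neg_nonneg.mpr (hneg y)) (Finset.mem_univ x)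
        _ = -(ht (β l)) := by rw [Finset.sum_neg_distrib]; rfl
    have hht0 : ht (β l) ≤ 0 := Finset.sum_nonpos (fun y _ => hneg y)
    rw [abs_of_nonpos hht0]
    omega


/-- if `A` is indecomposable with infinite Weyl group, `ω ∈ W` and `α ∈ Δ₊`
satisfy `ω^l α ≠ α` for every positive integer `l`, then `|ht(ω^l α)|` tends to infinity:
for every `N` there is `L` such that `|ht(ω^l α)| ≥ N` for all naturals `l ≥ L`. -/
theorem abs_height_tendsto_atTop (n : ℕ) (hn : 1 ≤ n) (A : Matrix (Fin n) (Fin n) ℤ)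
    (hA : IsGCM A) (hInd : Indecomposable A hA.2.2)
    (hWinf : Infinite (weyl A hA.1))
    (ω : (Fin n → ℤ) ≃ₗ[ℤ] (Fin n → ℤ)) (hω : ω ∈ weyl A hA.1)
    (α : Fin n → ℤ) (hα : α ∈ posRoots A hA.1 hA.2.2)
    (hfix : ∀ l : ℕ, 0 < l → (ω ^ l) α ≠ α) :
    ∀ N : ℕ, ∃ L : ℕ, ∀ l : ℕ, L ≤ l → (N : ℤ) ≤ |ht ((ω ^ l) α)| :=
  main_assembly A hA ω hω α hα hfix

end KacMoodyPaper
end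

section
/- Let G be a locally compact Hausdorff topological group, let a ∈ G, and let K be a compact subgroup of G such that a K a^{−1} = K and K ⊆ con(a). Then K is the trivial subgroup. -/
open Filter Topology

namespace KacMoodyPaper

/-- The contraction group of `a`: all `g` with `a^n g a^{-n} → 1` as `n → ∞`. -/
def con {G : Type*} [Group G] [TopologicalSpace G] (a : G) : Set G :=
  {g | Filter.Tendsto (fun k : ℕ => a ^ k * g * (a ^ k)⁻¹) Filter.atTop (nhds 1)}

/-- in a locally compact Hausdorff topological group, a compact subgroup `K`
with `a K a⁻¹ = K` and `K ⊆ con(a)` is trivial. -/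
theorem compact_invariant_subgroup_in_con_trivial {G : Type*} [Group G] [TopologicalSpace G]
    [IsTopologicalGroup G] [LocallyCompactSpace G] [T2Space G]
    (a : G) (K : Subgroup G) (hKc : IsCompact (K : Set G))
    (hconj : (fun g => a * g * a⁻¹) '' (K : Set G) = (K : Set G))
    (hsub : (K : Set G) ⊆ con a) :
    K = ⊥ := by
  have hmemK : ∀ g ∈ K, a⁻¹ * g * a ∈ K := by
    intro g hg
    have hgK : g ∈ (fun g => a * g * a⁻¹) '' (K : Set G) := by rw [hconj]; exact hg
    obtain ⟨h, hh, rfl⟩ := hgK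
    have : a⁻¹ * (a * h * a⁻¹) * a = h := by group
    rw [this]; exact hh
  have hback : ∀ (n : ℕ), ∀ g ∈ K, (a ^ n)⁻¹ * g * a ^ n ∈ K := by
    intro n
    induction n with
    | zero => intro g hg; simpa using hg
    | succ n ih =>
      intro g hg
      have h1 : a⁻¹ * g * a ∈ K := hmemK g hg
      have h2 := ih _ h1
      have heq : (a ^ (n + 1))⁻¹ * g * a ^ (n + 1) = (a ^ n)⁻¹ * (a⁻¹ * g * a) * a ^ n := by
        rw [pow_succ]; group
      rw [heq]; exact h2
  have key : ∀ W ∈ 𝓝 (1 : G), (K : Set G) ⊆ W := by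
    intro W hW
    obtain ⟨U, hUo, hU1, hUU⟩ := exists_open_nhds_one_mul_subset hW
    have hUn : U ∈ 𝓝 (1 : G) := hUo.mem_nhds hU1
    obtain ⟨C, hCn, hCc, hCU⟩ := exists_mem_nhds_isClosed_subset hUn
    haveI : CompactSpace ↥K := isCompact_iff_compactSpace.mp hKc
    set S : ℕ → Set ↥K := fun N => {x | ∀ m, N ≤ m → a ^ m * (x : G) * (a ^ m)⁻¹ ∈ C} with hS
    have hSclosed : ∀ N, IsClosed (S N) := by
      intro N
      have : S N = ⋂ m, ⋂ (_ : N ≤ m), (fun x : ↥K => a ^ m * (x : G) * (a ^ m)⁻¹) ⁻¹' C := by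
        ext x; simp [hS]
      rw [this]
      exact isClosed_iInter fun m => isClosed_iInter fun _ =>
        hCc.preimage ((continuous_const.mul continuous_subtype_val).mul continuous_const)
    have hScover : ⋃ N, S N = Set.univ := by
      ext x
      simp only [Set.mem_iUnion, Set.mem_univ, iff_true]
      have hx : (x : G) ∈ con a := hsub x.2
      have hev : ∀ᶠ k in atTop, a ^ k * (x : G) * (a ^ k)⁻¹ ∈ C := hx.eventually_mem hCn
      obtain ⟨N, hN⟩ := eventually_atTop.mp hev
      exact ⟨N, hN⟩
    obtain ⟨N, x₀, hx₀⟩ := nonempty_interior_of_iUnion_of_closed hSclosed hScover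
    set O := interior (S N) with hO
    have hcov : (Set.univ : Set ↥K) ⊆ ⋃ h : ↥K, (fun x : ↥K => h⁻¹ * x) ⁻¹' O := by
      intro x _
      refine Set.mem_iUnion.mpr ⟨x * x₀⁻¹, ?_⟩
      have : (x * x₀⁻¹)⁻¹ * x = x₀ := by group
      show (x * x₀⁻¹)⁻¹ * x ∈ O
      rw [this]; exact hx₀
    obtain ⟨t, ht⟩ := isCompact_univ.elim_finite_subcover
      (fun h : ↥K => (fun x : ↥K => h⁻¹ * x) ⁻¹' O)
      (fun h => isOpen_interior.preimage (continuous_const.mul continuous_id)) hcov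
    have hev : ∀ᶠ n in atTop, ∀ h ∈ t, a ^ n * (h : G) * (a ^ n)⁻¹ ∈ U := by
      rw [eventually_all_finset]
      intro h _
      exact (hsub h.2).eventually_mem hUn
    obtain ⟨n, hnN, hn⟩ := ((eventually_ge_atTop N).and hev).exists
    intro g hg
    have hg' : (a ^ n)⁻¹ * g * a ^ n ∈ K := hback n g hg
    set x : ↥K := ⟨(a ^ n)⁻¹ * g * a ^ n, hg'⟩ with hx
    obtain ⟨h, hht, hxh⟩ := Set.mem_iUnion₂.mp (ht (Set.mem_univ x))
    have hmem : h⁻¹ * x ∈ S N := interior_subset hxh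
    have hc : a ^ n * ((h⁻¹ * x : ↥K) : G) * (a ^ n)⁻¹ ∈ C := hmem n hnN
    have hu : a ^ n * (h : G) * (a ^ n)⁻¹ ∈ U := hn h hht
    have hgeq : g = (a ^ n * (h : G) * (a ^ n)⁻¹) *
        (a ^ n * ((h⁻¹ * x : ↥K) : G) * (a ^ n)⁻¹) := by
      have hxcoe : ((x : ↥K) : G) = (a ^ n)⁻¹ * g * a ^ n := rfl
      simp only [Subgroup.coe_mul, InvMemClass.coe_inv, hxcoe]
      group
    rw [hgeq]
    exact hUU (Set.mul_mem_mul hu (hCU hc))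
  have h1 : ∀ g ∈ K, g = 1 := by
    intro g hg
    by_contra hne
    have hW : ({g}ᶜ : Set G) ∈ 𝓝 (1 : G) :=
      isOpen_compl_singleton.mem_nhds (by simpa using (Ne.symm hne))
    exact (key _ hW hg) rfl
  exact (Subgroup.eq_bot_iff_forall K).mpr h1

end KacMoodyPaper
end

section
/- Let G be a locally compact, totally disconnected Hausdorff topological group and let H be a closed normal subgroup of G such that the quotient group G/H is compact. Then for every a ∈ G the contraction group con(a), and hence also its closure in G, is contained in H. -/
open Filter Topology

namespace KacMoodyPaper

/-- in a locally compact totally disconnected Hausdorff topological group `G`,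
if `H` is a closed normal subgroup with `G/H` compact, then `con(a) ⊆ H` (and hence
`closure (con a) ⊆ H`) for every `a ∈ G`. -/
theorem con_subset_cocompact_closed_normal {G : Type*} [Group G] [TopologicalSpace G]
    [IsTopologicalGroup G] [LocallyCompactSpace G] [TotallyDisconnectedSpace G] [T2Space G]
    (H : Subgroup G) [H.Normal] (hHc : IsClosed (H : Set G))
    (hcompact : CompactSpace (G ⧸ H)) :
    ∀ a : G, con a ⊆ (H : Set G) ∧ closure (con a) ⊆ (H : Set G) := by
  intro a
  have key : con a ⊆ (H : Set G) := by
    intro g hg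
    -- work in the compact Hausdorff quotient Q = G ⧸ H
    set π : G →* G ⧸ H := QuotientGroup.mk' H with hπ
    have hπc : Continuous π := continuous_quotient_mk'
    set b : G ⧸ H := π a with hb
    -- the pushed-forward contraction condition
    have hg' : Tendsto (fun k : ℕ => b ^ k * π g * (b ^ k)⁻¹) atTop (𝓝 1) := by
      have := (hπc.tendsto 1).comp hg
      simpa [Function.comp_def, map_mul, map_pow, map_inv] using this
    -- a cluster point of k ↦ b ^ k
    have hne : (map (fun k : ℕ => b ^ k) atTop) ≤ Filter.principal (Set.univ) := by
      simp
    obtain ⟨c, -, hc⟩ := isCompact_univ.exists_clusterPt (f := map (fun k : ℕ => b ^ k) atTop)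
      (by simp)
    -- push cluster point through the continuous conjugation map
    have hcont : Continuous fun y : G ⧸ H => y * π g * y⁻¹ := by continuity
    have hc2 : ClusterPt (c * π g * c⁻¹)
        (map (fun k : ℕ => b ^ k * π g * (b ^ k)⁻¹) atTop) := by
      refine hc.map hcont.continuousAt ?_
      rw [show map (fun k : ℕ => b ^ k * π g * (b ^ k)⁻¹) atTop
          = map (fun y : G ⧸ H => y * π g * y⁻¹) (map (fun k : ℕ => b ^ k) atTop) by
        rw [Filter.map_map]; rfl]
      exact tendsto_map
    have h1 : c * π g * c⁻¹ = 1 :=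
      t2_iff_nhds.mp inferInstance (hc2.mono hg')
    have hπg : π g = 1 := by
      have : π g = c⁻¹ * 1 * c := by
        rw [← h1]; group
      simpa using this
    exact (QuotientGroup.eq_one_iff g).mp hπg
  exact ⟨key, by
    have : closure (con a) ⊆ closure (H : Set G) := closure_mono key
    rwa [hHc.closure_eq] at this⟩

end KacMoodyPaper
end

section
/- Let π : G → H be a continuous homomorphism of topological groups with H locally compact Hausdorff, let a ∈ G, and let K be a compact subgroup of G such that a K a^{−1} = K and K is contained in the closure of con(a) in G. If the contraction group con(π(a)) is closed in H, then K ⊆ ker π. -/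
open Filter Topology

namespace KacMoodyPaper

open MeasureTheory in
/-- Key lemma: a compact subgroup `Q` of a Hausdorff topological group, invariant under
conjugation by `b` and contained in `con b`, is trivial. Proved using the Haar measure
on the compact group `Q`. -/
theorem compact_subgroup_of_con_trivial {H : Type*} [Group H] [TopologicalSpace H]
    [IsTopologicalGroup H] [T2Space H] (b : H) (Q : Subgroup H)
    (hQc : IsCompact (Q : Set H))
    (hconj : (fun g => b * g * b⁻¹) '' (Q : Set H) = (Q : Set H))
    (hsub : (Q : Set H) ⊆ con b) : ∀ x ∈ Q, x = 1 := by
  -- conjugation by `b` maps `Q` into `Q`, and so does conjugation by `b⁻¹`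
  have hmem : ∀ x ∈ Q, b * x * b⁻¹ ∈ Q := by
    intro x hx
    have : b * x * b⁻¹ ∈ (fun g => b * g * b⁻¹) '' (Q : Set H) := ⟨x, hx, rfl⟩
    rwa [hconj] at this
  have hmem' : ∀ y ∈ Q, b⁻¹ * y * b ∈ Q := by
    intro y hy
    have : (y : H) ∈ (fun g => b * g * b⁻¹) '' (Q : Set H) := by rwa [hconj]
    obtain ⟨x, hx, hxy⟩ := this
    have : b⁻¹ * y * b = x := by rw [← hxy]; group
    rwa [this]
  -- iterate: conjugation by `b ^ n`
  have hmemn : ∀ n : ℕ, ∀ x ∈ Q, b ^ n * x * (b ^ n)⁻¹ ∈ Q := by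
    intro n
    induction n with
    | zero => intro x hx; simpa using hx
    | succ n ih =>
      intro x hx
      have h1 : b ^ (n + 1) * x * (b ^ (n + 1))⁻¹
          = b * (b ^ n * x * (b ^ n)⁻¹) * b⁻¹ := by
        rw [pow_succ']; group
      rw [h1]
      exact hmem _ (ih x hx)
  have hmemn' : ∀ n : ℕ, ∀ y ∈ Q, (b ^ n)⁻¹ * y * b ^ n ∈ Q := by
    intro n
    induction n with
    | zero => intro y hy; simpa using hy
    | succ n ih =>
      intro y hy
      have h1 : (b ^ (n + 1))⁻¹ * y * b ^ (n + 1)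
          = (b ^ n)⁻¹ * (b⁻¹ * y * b) * b ^ n := by
        rw [pow_succ']; group
      rw [h1]
      exact ih _ (hmem' y hy)
  -- set up the compact group `Q` with its Haar measure
  haveI : CompactSpace (Q : Set H) := isCompact_iff_compactSpace.mp hQc
  letI : MeasurableSpace Q := borel Q
  haveI : BorelSpace Q := ⟨rfl⟩
  -- the conjugation maps as monoid homs of `Q`
  set ψ : ℕ → (Q →* Q) := fun n =>
    { toFun := fun x => ⟨b ^ n * x * (b ^ n)⁻¹, hmemn n x x.2⟩
      map_one' := by ext; simp
      map_mul' := by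
        intro x y
        ext
        show b ^ n * (↑x * ↑y) * (b ^ n)⁻¹
          = (b ^ n * ↑x * (b ^ n)⁻¹) * (b ^ n * ↑y * (b ^ n)⁻¹)
        group } with hψ
  have hψcont : ∀ n, Continuous (ψ n) := by
    intro n
    exact Continuous.subtype_mk
      ((continuous_const.mul continuous_subtype_val).mul continuous_const) _
  have hψsurj : ∀ n, Function.Surjective (ψ n) := by
    intro n y
    refine ⟨⟨(b ^ n)⁻¹ * y * b ^ n, hmemn' n y y.2⟩, ?_⟩
    ext
    show b ^ n * ((b ^ n)⁻¹ * ↑y * b ^ n) * (b ^ n)⁻¹ = (y : H)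
    group
  set μ : Measure Q := MeasureTheory.Measure.haar with hμ
  have hψmp : ∀ n, MeasurePreserving (ψ n) μ μ := fun n =>
    (ψ n).measurePreserving (hψcont n) (hψsurj n) rfl
  -- main argument
  intro x hx
  by_contra hne
  obtain ⟨U, V, hU, hV, h1U, hxV, hUV⟩ := t2_separation (Ne.symm hne)
  -- sets in Q
  set U' : Set Q := Subtype.val ⁻¹' U with hU'def
  set V' : Set Q := Subtype.val ⁻¹' V with hV'def
  have hU'open : IsOpen U' := hU.preimage continuous_subtype_val
  have hV'open : IsOpen V' := hV.preimage continuous_subtype_val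
  set A : ℕ → Set Q := fun n => ⋂ m, ⋂ (_ : n ≤ m), (ψ m) ⁻¹' U' with hA
  have hAmono : Monotone A := by
    intro n n' hnn' z hz
    simp only [hA, Set.mem_iInter] at hz ⊢
    intro m hm
    exact hz m (le_trans hnn' hm)
  have hAunion : ⋃ n, A n = Set.univ := by
    ext z
    simp only [Set.mem_iUnion, Set.mem_univ, iff_true]
    have hz : Tendsto (fun k : ℕ => b ^ k * (z : H) * (b ^ k)⁻¹) atTop (nhds 1) :=
      hsub z.2
    have : ∀ᶠ k in atTop, b ^ k * (z : H) * (b ^ k)⁻¹ ∈ U :=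
      hz (hU.mem_nhds h1U)
    obtain ⟨n, hn⟩ := eventually_atTop.mp this
    refine ⟨n, ?_⟩
    simp only [hA, Set.mem_iInter]
    intro m hm
    exact hn m hm
  have hAmeas : ∀ n, MeasurableSet (A n) := by
    intro n
    apply MeasurableSet.iInter
    intro m
    apply MeasurableSet.iInter
    intro _
    exact (hU'open.preimage (hψcont m)).measurableSet
  have hAbound : ∀ n, μ (A n) ≤ μ U' := by
    intro n
    calc μ (A n) ≤ μ ((ψ n) ⁻¹' U') := by
          apply measure_mono
          intro z hz
          simp only [hA, Set.mem_iInter] at hz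
          exact hz n le_rfl
      _ = μ U' := (hψmp n).measure_preimage hU'open.measurableSet.nullMeasurableSet
  have htend : Tendsto (fun n => μ (A n)) atTop (nhds (μ (⋃ n, A n))) :=
    tendsto_measure_iUnion_atTop hAmono
  rw [hAunion] at htend
  have huniv_le : μ Set.univ ≤ μ U' :=
    le_of_tendsto' htend hAbound
  -- but V' is a nonempty open set disjoint from U'
  have hV'pos : 0 < μ V' := hV'open.measure_pos μ ⟨⟨x, hx⟩, hxV⟩
  have hdisj : Disjoint U' V' := by
    apply Set.disjoint_left.mpr
    intro z hzU hzV
    exact Set.disjoint_left.mp hUV hzU hzV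
  have hadd : μ U' + μ V' = μ (U' ∪ V') :=
    (measure_union hdisj hV'open.measurableSet).symm
  have hle : μ U' + μ V' ≤ μ U' := by
    rw [hadd]
    exact le_trans (measure_mono (Set.subset_univ _)) huniv_le
  have hfin : μ U' ≠ ⊤ := measure_ne_top μ U'
  have : μ V' = 0 := by
    by_contra hV0
    have : μ U' < μ U' + μ V' :=
      ENNReal.lt_add_right hfin hV0
    exact absurd hle (not_le.mpr this)
  exact absurd this hV'pos.ne'

/-- if `π : G → H` is a continuous homomorphism with `H` locally compact
Hausdorff, `K` is a compact subgroup of `G` with `a K a⁻¹ = K` and `K ⊆ closure (con a)`,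
and `con (π a)` is closed in `H`, then `K ⊆ ker π`. -/
theorem compact_invariant_subgroup_in_ker {G H : Type*} [Group G] [TopologicalSpace G]
    [IsTopologicalGroup G] [Group H] [TopologicalSpace H] [IsTopologicalGroup H]
    [LocallyCompactSpace H] [T2Space H]
    (π : G →* H) (hπ : Continuous π) (a : G) (K : Subgroup G)
    (hKc : IsCompact (K : Set G))
    (hconj : (fun g => a * g * a⁻¹) '' (K : Set G) = (K : Set G))
    (hsub : (K : Set G) ⊆ closure (con a))
    (hclosed : IsClosed (con (π a))) :
    ∀ g ∈ K, π g = 1 := by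
  set b : H := π a with hb
  set Q : Subgroup H := K.map π with hQ
  have hQcoe : (Q : Set H) = π '' (K : Set G) := by
    simp [hQ, Subgroup.coe_map]
  have hQc : IsCompact (Q : Set H) := by
    rw [hQcoe]; exact hKc.image hπ
  -- π maps con a into con b
  have hcon : π '' con a ⊆ con b := by
    rintro _ ⟨g, hg, rfl⟩
    have : Tendsto (fun k : ℕ => π (a ^ k * g * (a ^ k)⁻¹)) atTop (nhds (π 1)) :=
      (hπ.tendsto 1).comp hg
    simpa [con, map_mul, map_pow, map_inv, hb] using this
  -- Q ⊆ con b
  have hQsub : (Q : Set H) ⊆ con b := by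
    rw [hQcoe]
    intro y hy
    obtain ⟨g, hg, rfl⟩ := hy
    have h1 : π g ∈ π '' closure (con a) := ⟨g, hsub hg, rfl⟩
    have h2 : π '' closure (con a) ⊆ closure (π '' con a) :=
      image_closure_subset_closure_image hπ
    have h3 : closure (π '' con a) ⊆ closure (con b) := closure_mono hcon
    have h4 : closure (con b) = con b := hclosed.closure_eq
    exact h4 ▸ h3 (h2 h1)
  -- conjugation invariance of Q
  have key : ∀ g : G, b * π g * b⁻¹ = π (a * g * a⁻¹) := fun g => by
    simp [hb, map_mul, map_inv]
  have hKa : ∀ g ∈ K, a * g * a⁻¹ ∈ (K : Set G) := by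
    intro g hg
    have : a * g * a⁻¹ ∈ (fun g => a * g * a⁻¹) '' (K : Set G) := ⟨g, hg, rfl⟩
    rwa [hconj] at this
  have hQconj : (fun h => b * h * b⁻¹) '' (Q : Set H) = (Q : Set H) := by
    rw [hQcoe]
    apply Set.Subset.antisymm
    · rintro _ ⟨_, ⟨g, hg, rfl⟩, rfl⟩
      exact ⟨a * g * a⁻¹, hKa g hg, (key g).symm⟩
    · rintro _ ⟨k, hk, rfl⟩
      have : k ∈ (fun g => a * g * a⁻¹) '' (K : Set G) := by rw [hconj]; exact hk
      obtain ⟨g, hg, rfl⟩ := this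
      exact ⟨π g, ⟨g, hg, rfl⟩, key g⟩
  have := compact_subgroup_of_con_trivial b Q hQc hQconj hQsub
  intro g hg
  exact this (π g) ⟨g, hg, rfl⟩

end KacMoodyPaper
end

section
/- Let G be a locally compact Hausdorff topological group, let a ∈ G, and let K be a nontrivial compact subgroup of G such that a K a^{−1} = K and K is contained in the closure of con(a) in G. Then con(a) is not closed in G. -/
open Filter Topology

namespace KacMoodyPaper

/-- in a locally compact Hausdorff topological group, if there is a
nontrivial compact subgroup `K` with `a K a⁻¹ = K` and `K ⊆ closure (con a)`, then
`con a` is not closed. -/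
theorem con_not_closed_of_nontrivial_compact_invariant {G : Type*} [Group G]
    [TopologicalSpace G] [IsTopologicalGroup G] [LocallyCompactSpace G] [T2Space G]
    (a : G) (K : Subgroup G) (hKnt : K ≠ ⊥) (hKc : IsCompact (K : Set G))
    (hconj : (fun g => a * g * a⁻¹) '' (K : Set G) = (K : Set G))
    (hsub : (K : Set G) ⊆ closure (con a)) :
    ¬ IsClosed (con a) := by
  intro hcl
  -- `K ⊆ con a`
  have hKsub : (K : Set G) ⊆ con a := by
    intro g hg; have := hsub hg; rwa [hcl.closure_eq] at this
  obtain ⟨x, hx⟩ := Subgroup.ne_bot_iff_exists_ne_one.mp hKnt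
  -- instances on the compact group `↥K`
  haveI : CompactSpace ↥K := isCompact_iff_compactSpace.mp hKc
  haveI : Nonempty ↥K := ⟨1⟩
  letI : MeasurableSpace ↥K := borel ↥K
  haveI : BorelSpace ↥K := ⟨rfl⟩
  -- conjugation by `a` as a monoid hom of `↥K`
  have hmem : ∀ g ∈ K, a * g * a⁻¹ ∈ K := fun g hg => by
    rw [← SetLike.mem_coe, ← hconj]; exact Set.mem_image_of_mem _ hg
  let φ : ↥K →* ↥K :=
    { toFun := fun k => ⟨a * (k : G) * a⁻¹, hmem k k.2⟩
      map_one' := by ext; simp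
      map_mul' := fun k l => by ext; push_cast; group }
  have hφc : Continuous φ := by
    apply Continuous.subtype_mk
    exact (continuous_const.mul continuous_subtype_val).mul continuous_const
  have hφs : Function.Surjective φ := by
    intro g
    have hg : (g : G) ∈ (fun g => a * g * a⁻¹) '' (K : Set G) := by
      rw [hconj]; exact g.2
    obtain ⟨h, hh, hh'⟩ := hg
    exact ⟨⟨h, hh⟩, Subtype.ext hh'⟩
  -- Haar probability measure on `↥K`
  set μ := MeasureTheory.Measure.haarMeasure (⊤ : TopologicalSpace.PositiveCompacts ↥K) with hμ
  have hμuniv : μ Set.univ = 1 := by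
    have := MeasureTheory.Measure.haarMeasure_self
      (K₀ := (⊤ : TopologicalSpace.PositiveCompacts ↥K))
    rwa [TopologicalSpace.PositiveCompacts.coe_top] at this
  have hmp : MeasureTheory.MeasurePreserving φ μ μ :=
    MonoidHom.measurePreserving (f := φ) hφc hφs rfl
  have hiter : ∀ n, MeasureTheory.MeasurePreserving φ^[n] μ μ := hmp.iterate
  -- the iterates of `φ`, concretely
  have hcoe : ∀ (n : ℕ) (k : ↥K), ((φ^[n] k : ↥K) : G) = a ^ n * (k : G) * (a ^ n)⁻¹ := by
    intro n
    induction n with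
    | zero => intro k; simp
    | succ n ih =>
      intro k
      rw [Function.iterate_succ_apply']
      have : ((φ (φ^[n] k) : ↥K) : G) = a * ((φ^[n] k : ↥K) : G) * a⁻¹ := rfl
      rw [this, ih k, pow_succ]
      group
  -- pointwise convergence of the iterates to 1
  have hptw : ∀ k : ↥K, Tendsto (fun n => φ^[n] k) atTop (nhds (1 : ↥K)) := by
    intro k
    rw [Topology.IsEmbedding.subtypeVal.tendsto_nhds_iff]
    have hk : (k : G) ∈ con a := hKsub k.2
    have : (Subtype.val ∘ fun n => φ^[n] k) = fun n : ℕ => a ^ n * (k : G) * (a ^ n)⁻¹ := by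
      funext n; exact hcoe n k
    rw [this]
    exact hk
  -- separate 1 and x by disjoint open sets
  obtain ⟨W, U, hWo, hUo, hxW, h1U, hd⟩ := t2_separation hx
  -- every open neighborhood of 1 has full measure
  set A : ℕ → Set ↥K := fun n => ⋂ m, ⋂ (_ : n ≤ m), φ^[m] ⁻¹' U with hA
  have hAmono : Monotone A := by
    intro n n' hnn' k hk
    simp only [hA, Set.mem_iInter] at hk ⊢
    intro m hm; exact hk m (hnn'.trans hm)
  have hAunion : (⋃ n, A n) = Set.univ := by
    apply Set.eq_univ_of_forall
    intro k
    have := (hptw k).eventually (hUo.mem_nhds h1U)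
    obtain ⟨N, hN⟩ := eventually_atTop.mp this
    refine Set.mem_iUnion.mpr ⟨N, ?_⟩
    simp only [hA, Set.mem_iInter]
    exact fun m hm => hN m hm
  have hAle : ∀ n, μ (A n) ≤ μ U := by
    intro n
    calc μ (A n) ≤ μ (φ^[n] ⁻¹' U) := by
          apply MeasureTheory.measure_mono
          intro k hk
          simp only [hA, Set.mem_iInter] at hk
          exact hk n le_rfl
      _ = μ U := (hiter n).measure_preimage hUo.measurableSet.nullMeasurableSet
  have hμU : μ U = 1 := by
    have htend : Tendsto (μ ∘ A) atTop (nhds (μ (⋃ n, A n))) :=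
      MeasureTheory.tendsto_measure_iUnion_atTop hAmono
    rw [hAunion, hμuniv] at htend
    have h1le : (1 : ENNReal) ≤ μ U := le_of_tendsto htend (Eventually.of_forall hAle)
    have hle1 : μ U ≤ 1 := by
      rw [← hμuniv]; exact MeasureTheory.measure_mono (Set.subset_univ U)
    exact le_antisymm hle1 h1le
  -- but then the open set W around x has measure 0, contradicting positivity
  have hWpos : 0 < μ W := hWo.measure_pos μ ⟨x, hxW⟩
  have hW0 : μ W = 0 := by
    have hUW : μ (U ∪ W) = μ U + μ W := MeasureTheory.measure_union hd.symm hWo.measurableSet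
    have : μ U + μ W ≤ 1 := by
      rw [← hUW, ← hμuniv]; exact MeasureTheory.measure_mono (Set.subset_univ _)
    rw [hμU] at this
    have h2 : (1 : ENNReal) + μ W ≤ 1 + 0 := by simpa using this
    have := (ENNReal.add_le_add_iff_left ENNReal.one_ne_top).mp h2
    exact le_antisymm this bot_le
  exact hWpos.ne' hW0

end KacMoodyPaper
end
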